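/- Let r ≥ 1 be a natural number, D an integer, and h : ℤ → ℤ a function. There exists a nonincreasing tuple d : Fin r → ℤ (d i ≥ d j whenever i ≤ j) with ∑_{i : Fin r} d i = D and h(e) = ∑_{i : Fin r} max(d i + e + 1, 0) for all integers e, if and only if: (i) h(e+1) + h(e−1) ≥ 2·h(e) for all e ∈ ℤ; (ii) h(e) = 0 for all sufficiently small e; and (iii) h(e) = D + r·(e+1) for all sufficiently large e. -/

import Mathlib

private lemma sum_indicator_lt : ∀ (r : ℕ) (c : ℤ), 0 ≤ c → c ≤ (r : ℤ) →
    ∑ i : Fin r, (if (i : ℤ) < c then (1:ℤ) else 0) = c := by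
  intro r
  induction r with
  | zero => intro c h0 h1; simp at h1 ⊢; omega
  | succ n ih =>
    intro c h0 h1
    rw [Fin.sum_univ_castSucc]
    by_cases hc : c ≤ (n : ℤ)
    · have hlast : ¬ (((Fin.last n : Fin (n+1)) : ℤ) < c) := by
        simp [Fin.val_last]; omega
      have hterm : ∀ i : Fin n,
          (if (((i.castSucc : Fin (n+1)) : ℤ) < c) then (1:ℤ) else 0)
            = (if ((i : ℤ) < c) then (1:ℤ) else 0) := by
        intro i; simp [Fin.coe_castSucc]
      rw [Finset.sum_congr rfl (fun i _ => hterm i), ih c h0 hc, if_neg hlast]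
      ring
    · have hc' : c = (n : ℤ) + 1 := by push_cast at h1; omega
      have hterm : ∀ i : Fin n,
          (if (((i.castSucc : Fin (n+1)) : ℤ) < c) then (1:ℤ) else 0) = 1 := by
        intro i
        have : (i : ℤ) < (n : ℤ) := by exact_mod_cast i.isLt
        simp [Fin.coe_castSucc]; omega
      have hlast : (((Fin.last n : Fin (n+1)) : ℤ) < c) := by
        simp [Fin.val_last]; omega
      rw [Finset.sum_congr rfl (fun i _ => hterm i), if_pos hlast]
      simp [Finset.sum_const, Finset.card_univ]
      omega

theorem exists_splitting_type_iff
    (r : ℕ) (hr : 1 ≤ r) (D : ℤ) (h : ℤ → ℤ) :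
    (∃ d : Fin r → ℤ, (∀ i j : Fin r, i ≤ j → d j ≤ d i) ∧
        (∑ i : Fin r, d i = D) ∧
        (∀ e : ℤ, h e = ∑ i : Fin r, max (d i + e + 1) 0)) ↔
      ((∀ e : ℤ, 2 * h e ≤ h (e + 1) + h (e - 1)) ∧
        (∃ N : ℤ, ∀ e : ℤ, e ≤ N → h e = 0) ∧
        (∃ M : ℤ, ∀ e : ℤ, M ≤ e → h e = D + (r : ℤ) * (e + 1))) := by
  classical
  constructor
  · rintro ⟨d, hmono, hsum, hh⟩
    have i0 : Fin r := ⟨0, hr⟩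
    have ilast : Fin r := ⟨r - 1, by omega⟩
    refine ⟨?_, ?_, ?_⟩
    · intro e
      rw [hh e, hh (e+1), hh (e-1), ← Finset.sum_add_distrib, Finset.mul_sum]
      apply Finset.sum_le_sum
      intro i _
      omega
    · refine ⟨-(d ⟨0, hr⟩) - 2, fun e he => ?_⟩
      rw [hh]
      apply Finset.sum_eq_zero
      intro i _
      have hd : d i ≤ d ⟨0, hr⟩ := hmono ⟨0, hr⟩ i (by simp [Fin.le_def])
      omega
    · refine ⟨-(d ⟨r-1, by omega⟩) - 1, fun e he => ?_⟩
      rw [hh]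
      have hterm : ∀ i : Fin r, max (d i + e + 1) 0 = d i + (e + 1) := by
        intro i
        have hd : d ⟨r-1, by omega⟩ ≤ d i := hmono i ⟨r-1, by omega⟩
          (by simp [Fin.le_def]; omega)
        omega
      rw [Finset.sum_congr rfl (fun i _ => hterm i), Finset.sum_add_distrib, hsum]
      simp only [Finset.sum_const, Finset.card_univ, Fintype.card_fin, nsmul_eq_mul]
      try ring
  · rintro ⟨hconv, ⟨N, hN⟩, ⟨M, hM⟩⟩
    set g : ℤ → ℤ := fun e => h e - h (e - 1) with hg
    have gmono : ∀ a b : ℤ, a ≤ b → g a ≤ g b := by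
      intro a b hab
      refine Int.le_induction (motive := fun b _ => g a ≤ g b) ?_ ?_ b hab
      · exact le_refl _
      · intro n hn ih
        have hc := hconv n
        have h1 : g (n + 1) = h (n + 1) - h n := by
          simp only [hg]; rw [show n + 1 - 1 = n by ring]
        have h2 : g n = h n - h (n - 1) := rfl
        omega
    have gN : ∀ e : ℤ, e ≤ N → g e = 0 := by
      intro e he
      simp only [hg]
      rw [hN e he, hN (e-1) (by omega)]
      ring
    have gM : ∀ e : ℤ, M + 1 ≤ e → g e = r := by
      intro e he
      simp only [hg]
      rw [hM e (by omega), hM (e-1) (by omega)]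
      ring
    have hg0 : ∀ e : ℤ, 0 ≤ g e := by
      intro e
      by_cases he : e ≤ N
      · rw [gN e he]
      · have := gmono N e (by omega)
        rw [gN N le_rfl] at this
        exact this
    have hgr : ∀ e : ℤ, g e ≤ r := by
      intro e
      by_cases he : M + 1 ≤ e
      · rw [gM e he]
      · have := gmono e (M+1) (by omega)
        rw [gM (M+1) le_rfl] at this
        exact this
    have hE : ∀ i : Fin r, ∃ lb : ℤ, ((i : ℤ) + 1 ≤ g lb) ∧
        ∀ z : ℤ, ((i : ℤ) + 1 ≤ g z) → lb ≤ z := by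
      intro i
      apply Int.exists_least_of_bdd
      · refine ⟨N + 1, fun z hz => ?_⟩
        by_contra hcon
        push_neg at hcon
        have := gN z (by omega)
        have : (0:ℤ) ≤ i := Int.natCast_nonneg _
        omega
      · refine ⟨M + 1, ?_⟩
        have h1 := gM (M+1) le_rfl
        have h2 : (i : ℤ) < r := by exact_mod_cast i.isLt
        omega
    choose E hE1 hE2 using hE
    have hElb : ∀ i : Fin r, N + 1 ≤ E i := by
      intro i
      by_contra hcon
      push_neg at hcon
      have := gN (E i) (by omega)
      have h1 := hE1 i
      have : (0:ℤ) ≤ i := Int.natCast_nonneg _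
      omega
    have hEub : ∀ i : Fin r, E i ≤ M + 1 := by
      intro i
      apply hE2 i
      have h1 := gM (M+1) le_rfl
      have h2 : (i : ℤ) < r := by exact_mod_cast i.isLt
      omega
    have hcount : ∀ e : ℤ, (∑ i : Fin r, if E i ≤ e then (1:ℤ) else 0) = g e := by
      intro e
      have hiff : ∀ i : Fin r, (E i ≤ e) ↔ ((i : ℤ) < g e) := by
        intro i
        constructor
        · intro hle
          have := gmono (E i) e hle
          have := hE1 i
          omega
        · intro hlt
          exact hE2 i e (by omega)
      calc (∑ i : Fin r, if E i ≤ e then (1:ℤ) else 0)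
          = ∑ i : Fin r, if (i : ℤ) < g e then (1:ℤ) else 0 := by
            apply Finset.sum_congr rfl
            intro i _
            simp only [hiff i]
        _ = g e := sum_indicator_lt r (g e) (hg0 e) (hgr e)
    set F : ℤ → ℤ := fun e => ∑ i : Fin r, max (-(E i) + e + 1) 0 with hF
    have hFstep : ∀ e : ℤ, F e - F (e - 1) = g e := by
      intro e
      rw [← hcount e]
      simp only [hF]
      rw [← Finset.sum_sub_distrib]
      apply Finset.sum_congr rfl
      intro i _
      omega
    have hFN : ∀ e : ℤ, e ≤ N → F e = 0 := by
      intro e he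
      simp only [hF]
      apply Finset.sum_eq_zero
      intro i _
      have := hElb i
      omega
    have hhF : ∀ e : ℤ, h e = F e := by
      have key : ∀ n : ℕ, h (N + n) = F (N + n) := by
        intro n
        induction n with
        | zero => simpa using (hN N le_rfl).trans (hFN N le_rfl).symm
        | succ k ih =>
          have hstep := hFstep (N + k + 1)
          have hgstep : g (N + k + 1) = h (N + k + 1) - h (N + k) := by
            simp only [hg]; rw [show N + (k:ℤ) + 1 - 1 = N + k by ring]
          rw [show N + (k:ℤ) + 1 - 1 = N + k by ring] at hstep
          have : ((k:ℤ) + 1) = ((k + 1 : ℕ) : ℤ) := by push_cast; ring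
          rw [show N + ((k + 1 : ℕ) : ℤ) = N + k + 1 by push_cast; ring]
          omega
      intro e
      by_cases he : e ≤ N
      · rw [hN e he, hFN e he]
      · have he' : e = N + ((e - N).toNat : ℤ) := by omega
        rw [he']
        exact key _
    refine ⟨fun i => -(E i), ?_, ?_, ?_⟩
    · intro i j hij
      have hij' : (i : ℤ) ≤ (j : ℤ) := by exact_mod_cast hij
      have : E i ≤ E j := hE2 i (E j) (by have := hE1 j; omega)
      show -(E j) ≤ -(E i)
      omega
    · have h1 := hhF M
      have h2 := hM M le_rfl
      have h3 : F M = (∑ i : Fin r, -(E i)) + r * (M + 1) := by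
        simp only [hF]
        rw [Finset.sum_congr rfl (fun i _ =>
          show max (-(E i) + M + 1) 0 = -(E i) + (M + 1) from by have := hEub i; omega)]
        rw [Finset.sum_add_distrib]
        simp only [Finset.sum_const, Finset.card_univ, Fintype.card_fin, nsmul_eq_mul]
        try ring
      show (∑ i : Fin r, -(E i)) = D
      omega
    · intro e
      rw [hhF e]
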